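/- If f belongs to the class 𝓕, then f' is subordinate to 1/(1-z)³ on 𝔻: there exists an analytic function ω : 𝔻 → ℂ with ω(0) = 0 and |ω(z)| ≤ |z| for all z ∈ 𝔻, such that f'(z) = 1/(1 - ω(z))³ for all z ∈ 𝔻. -/

import Mathlib

open Complex Metric Filter Set
open scoped Topology NNReal ENNReal ComplexConjugate



open Complex Metric

/-- The class 𝓕 of normalized locally univalent analytic functions on the unit disk
satisfying `Re (1 + z f''(z)/f'(z)) > -1/2`. -/
def IsInClassF (f : ℂ → ℂ) : Prop :=
  AnalyticOnNhd ℂ f (ball (0 : ℂ) 1) ∧ f 0 = 0 ∧ deriv f 0 = 1 ∧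
    (∀ z ∈ ball (0 : ℂ) 1, deriv f z ≠ 0) ∧
    (∀ z ∈ ball (0 : ℂ) 1, (1 + z * deriv (deriv f) z / deriv f z).re > -(1/2))

/-- The `n`-th section (partial sum) `s_n(f)(z) = z + ∑_{k=2}^n a_k z^k`, where
`a_k = f^{(k)}(0)/k!`. -/
noncomputable def sectionF (f : ℂ → ℂ) (n : ℕ) (z : ℂ) : ℂ :=
  ∑ k ∈ Finset.Icc 1 n, (iteratedDeriv k f 0 / (Nat.factorial k)) * z ^ k


/-- A holomorphic function on the unit disk has a primitive vanishing at 0. -/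
lemma exists_primitive_aux (g : ℂ → ℂ) (hg : DifferentiableOn ℂ g (ball (0:ℂ) 1)) :
    ∃ h : ℂ → ℂ, h 0 = 0 ∧ ∀ z ∈ ball (0:ℂ) 1, HasDerivAt h (g z) z := by
  have base : ∀ s : ℝ≥0, 0 < s → (s:ℝ) < 1 →
      HasFPowerSeriesOnBall g (cauchyPowerSeries g 0 s) 0 s := by
    intro s hs0 hs1
    refine DifferentiableOn.hasFPowerSeriesOnBall ?_ hs0
    apply hg.mono
    intro x hx
    rw [mem_closedBall, dist_zero_right] at hx
    rw [mem_ball, dist_zero_right]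
    exact lt_of_le_of_lt hx hs1
  set p := cauchyPowerSeries g 0 (1/2 : ℝ≥0) with hp
  have hball : ∀ r : ℝ≥0, 0 < r → (r:ℝ) < 1 → HasFPowerSeriesOnBall g p 0 r := by
    intro r hr0 hr
    exact (base (1/2) (by norm_num) (by norm_num)).exchange_radius (base r hr0 hr)
  have hrad : ∀ r : ℝ≥0, (r:ℝ) < 1 → (r : ℝ≥0∞) < p.radius := by
    intro r hr
    have h1 : (0:ℝ) ≤ (r:ℝ) := r.coe_nonneg
    set r2 : ℝ≥0 := ⟨((r:ℝ)+1)/2, by positivity⟩ with hr2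
    have hrr2 : (r:ℝ) < (r2:ℝ) := by simp only [hr2]; show (r:ℝ) < ((r:ℝ)+1)/2; linarith
    have hr21 : (r2:ℝ) < 1 := by simp only [hr2]; show ((r:ℝ)+1)/2 < 1; linarith
    have hr20 : 0 < r2 := by
      rw [← NNReal.coe_lt_coe]; dsimp [hr2]; linarith
    calc (r : ℝ≥0∞) < (r2 : ℝ≥0∞) := by
          exact_mod_cast (by exact_mod_cast hrr2 : r < r2)
      _ ≤ p.radius := (hball r2 hr20 hr21).r_le
  have hcoeff : ∀ n, ‖p.coeff n‖ ≤ ‖p n‖ := by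
    intro n
    have h1 := (p n).le_opNorm 1
    rw [FormalMultilinearSeries.coeff]
    simpa using h1
  have hsum : ∀ z ∈ ball (0:ℂ) 1, HasSum (fun n => p.coeff n * z ^ n) (g z) := by
    intro z hz
    rw [mem_ball, dist_zero_right] at hz
    have h0 : (0:ℝ) ≤ ‖z‖ := norm_nonneg z
    set r : ℝ≥0 := ⟨(‖z‖+1)/2, by positivity⟩ with hrdef
    have hzr : ‖z‖ < (r:ℝ) := by simp only [hrdef, NNReal.coe_mk]; show ‖z‖ < (‖z‖+1)/2; linarith
    have hr1 : (r:ℝ) < 1 := by simp only [hrdef, NNReal.coe_mk]; show (‖z‖+1)/2 < 1; linarith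
    have hr0 : 0 < r := by rw [← NNReal.coe_lt_coe]; dsimp [hrdef]; linarith
    have hmem : z ∈ Metric.eball (0:ℂ) (r : ℝ≥0∞) := by
      rw [mem_emetric_ball_zero_iff]
      exact_mod_cast (by rw [← NNReal.coe_lt_coe, coe_nnnorm]; exact hzr : ‖z‖₊ < r)
    have := (hball r hr0 hr1).hasSum hmem
    rw [zero_add] at this
    have heq : (fun n => p n fun _ => z) = fun n => p.coeff n * z ^ n := by
      funext n
      rw [FormalMultilinearSeries.apply_eq_pow_smul_coeff, smul_eq_mul]; ring
    rwa [heq] at this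
  refine ⟨fun z => ∑' n, (p.coeff n / ((n:ℂ)+1)) * z ^ (n+1), by simp, ?_⟩
  intro z hz
  have hz' := hz
  rw [mem_ball, dist_zero_right] at hz'
  have h0 : (0:ℝ) ≤ ‖z‖ := norm_nonneg z
  set r : ℝ≥0 := ⟨(‖z‖+1)/2, by positivity⟩ with hrdef
  have hzr : ‖z‖ < (r:ℝ) := by simp only [hrdef, NNReal.coe_mk]; show ‖z‖ < (‖z‖+1)/2; linarith
  have hr1 : (r:ℝ) < 1 := by simp only [hrdef, NNReal.coe_mk]; show (‖z‖+1)/2 < 1; linarith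
  have hr0 : (0:ℝ) < (r:ℝ) := by linarith
  have hsummable : Summable (fun n => ‖p n‖ * (r:ℝ) ^ n) :=
    p.summable_norm_mul_pow (hrad r hr1)
  have key := hasDerivAt_tsum_of_isPreconnected hsummable
    (isOpen_ball : IsOpen (ball (0:ℂ) (r:ℝ)))
    ((convex_ball (0:ℂ) (r:ℝ)).isPreconnected)
    (g := fun n y => (p.coeff n / ((n:ℂ)+1)) * y ^ (n+1))
    (g' := fun n y => p.coeff n * y ^ n)
    (fun n y _ => ?_) (fun n y hy => ?_) (mem_ball_self hr0) ?_
    (mem_ball_zero_iff.2 hzr)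
  · rw [(hsum z hz).tsum_eq] at key
    exact key
  · -- HasDerivAt of the term
    have hne : ((n:ℂ)+1) ≠ 0 := Nat.cast_add_one_ne_zero n
    have hd := (hasDerivAt_pow (n+1) y).const_mul (p.coeff n / ((n:ℂ)+1))
    refine hd.congr_deriv (Eq.symm ?_)
    push_cast
    field_simp
  · -- bound
    rw [mem_ball_zero_iff] at hy
    rw [norm_mul, norm_pow]
    exact mul_le_mul (hcoeff n) (pow_le_pow_left₀ (norm_nonneg y) hy.le n)
      (pow_nonneg (norm_nonneg y) n) (norm_nonneg _)
  · -- summable at 0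
    have : (fun n => (p.coeff n / ((n:ℂ)+1)) * (0:ℂ) ^ (n+1)) = fun _ => (0:ℂ) := by
      funext n; simp
    rw [this]
    exact summable_zero

lemma jack_bound (ω G : ℂ → ℂ)
    (hωd : DifferentiableOn ℂ ω (ball (0:ℂ) 1))
    (hω0 : ω 0 = 0)
    (hωder : ∀ z ∈ ball (0:ℂ) 1, HasDerivAt ω (G z / 3 * (1 - ω z)) z)
    (hne : ∀ z, 1 - ω z ≠ 0)
    (hre : ∀ z ∈ ball (0:ℂ) 1, -(1/2 : ℝ) < (1 + z * G z).re) :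
    ∀ z ∈ ball (0:ℂ) 1, ‖ω z‖ < 1 := by
  by_contra hcon
  push_neg at hcon
  obtain ⟨z₁, hz₁b, hz₁⟩ := hcon
  have hr₁1 : ‖z₁‖ < 1 := mem_ball_zero_iff.1 hz₁b
  have hsub : closedBall (0:ℂ) ‖z₁‖ ⊆ ball (0:ℂ) 1 := closedBall_subset_ball hr₁1
  have hcont : ContinuousOn ω (closedBall (0:ℂ) ‖z₁‖) := (hωd.mono hsub).continuousOn
  set K : Set ℂ := closedBall (0:ℂ) ‖z₁‖ ∩ ω ⁻¹' {w | 1 ≤ ‖w‖} with hKdef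
  have hKclosed : IsClosed K :=
    hcont.preimage_isClosed_of_isClosed isClosed_closedBall
      (isClosed_le continuous_const continuous_norm)
  have hKcompact : IsCompact K :=
    (isCompact_closedBall (0:ℂ) ‖z₁‖).of_isClosed_subset hKclosed inter_subset_left
  have hKne : K.Nonempty := ⟨z₁, mem_closedBall_zero_iff.2 le_rfl, hz₁⟩
  obtain ⟨z₀, hz₀K, hz₀min⟩ := hKcompact.exists_isMinOn hKne continuous_norm.continuousOn
  have hz₀lower : (1:ℝ) ≤ ‖ω z₀‖ := hz₀K.2
  have hrr₁ : ‖z₀‖ ≤ ‖z₁‖ := mem_closedBall_zero_iff.1 hz₀K.1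
  have hr1 : ‖z₀‖ < 1 := lt_of_le_of_lt hrr₁ hr₁1
  have hz₀ball : z₀ ∈ ball (0:ℂ) 1 := mem_ball_zero_iff.2 hr1
  have hrpos : 0 < ‖z₀‖ := by
    rcases eq_or_ne z₀ 0 with h | h
    · exfalso
      rw [h, hω0, norm_zero] at hz₀lower
      linarith
    · exact norm_pos_iff.2 h
  -- points strictly inside radius ‖z₀‖ have ‖ω‖ < 1
  have hlt : ∀ y : ℂ, ‖y‖ < ‖z₀‖ → ‖ω y‖ < 1 := by
    intro y hy
    by_contra hy1
    push_neg at hy1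
    have hyK : y ∈ K := ⟨mem_closedBall_zero_iff.2 (le_trans hy.le hrr₁), hy1⟩
    exact absurd (hz₀min hyK) (by simpa using hy)
  -- Schwarz-type bound on the ball of radius r = ‖z₀‖
  have hmaps : MapsTo ω (ball (0:ℂ) ‖z₀‖) (ball (ω 0) 1) := by
    intro y hy
    rw [hω0, mem_ball_zero_iff]
    exact hlt y (mem_ball_zero_iff.1 hy)
  have hωd' : DifferentiableOn ℂ ω (ball (0:ℂ) ‖z₀‖) :=
    hωd.mono (ball_subset_ball hr1.le)
  have hdsl : ∀ y ∈ ball (0:ℂ) ‖z₀‖, ‖ω y‖ ≤ ‖y‖ / ‖z₀‖ := by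
    intro y hy
    have h1 := Complex.norm_dslope_le_div_of_mapsTo_ball hωd' (hmaps.mono_right ball_subset_closedBall) hy
    have h2 : ω y - ω 0 = (y - 0) • dslope ω 0 y := (sub_smul_dslope ω 0 y).symm
    rw [hω0, sub_zero, sub_zero] at h2
    calc ‖ω y‖ = ‖y‖ * ‖dslope ω 0 y‖ := by rw [h2, norm_smul]
      _ ≤ ‖y‖ * (1 / ‖z₀‖) := by
          exact mul_le_mul_of_nonneg_left h1 (norm_nonneg y)
      _ = ‖y‖ / ‖z₀‖ := by ring
  -- boundary bound by continuity
  have hsphere : ∀ y : ℂ, ‖y‖ = ‖z₀‖ → ‖ω y‖ ≤ 1 := by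
    intro y hy
    have hyb : y ∈ ball (0:ℂ) 1 := mem_ball_zero_iff.2 (hy ▸ hr1)
    have hcy : ContinuousAt ω y :=
      (hωd.differentiableAt (isOpen_ball.mem_nhds hyb)).continuousAt
    have htend : Tendsto (fun t : ℝ => ω ((t:ℂ) * y)) (𝓝[<] (1:ℝ)) (𝓝 (ω y)) := by
      have h1 : Tendsto (fun t : ℝ => (t:ℂ) * y) (𝓝 (1:ℝ)) (𝓝 y) := by
        have h2 : Continuous (fun t : ℝ => (t:ℂ) * y) :=
          Complex.continuous_ofReal.mul continuous_const
        simpa using h2.tendsto (1:ℝ)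
      exact hcy.tendsto.comp (h1.mono_left nhdsWithin_le_nhds)
    refine le_of_tendsto ((continuous_norm.tendsto _).comp htend) ?_
    filter_upwards [Ioo_mem_nhdsLT_of_mem (by norm_num : (1:ℝ) ∈ Ioc (0:ℝ) 1)] with t ht
    have hnorm : ‖(t:ℂ) * y‖ < ‖z₀‖ := by
      rw [norm_mul, Complex.norm_real, Real.norm_eq_abs, abs_of_pos ht.1, hy]
      nlinarith [ht.2, hrpos]
    exact (hlt _ hnorm).le
  have ha1 : ‖ω z₀‖ = 1 := le_antisymm (hsphere z₀ rfl) hz₀lower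
  set a : ℂ := ω z₀ with hadef
  set d : ℂ := G z₀ / 3 * (1 - a) with hddef
  have hd₀ : HasDerivAt ω d z₀ := hωder z₀ hz₀ball
  have haa : conj a * a = 1 := by
    have := RCLike.conj_mul (K := ℂ) a
    rw [this, ha1]
    norm_num
  set A : ℂ := conj a * (z₀ * d) with hAdef
  -- radial derivative bound : 1 ≤ A.re
  have hφder : HasDerivAt (fun t : ℝ => (conj a * ω ((t:ℂ) * z₀)).re) A.re 1 := by
    have hmc : HasDerivAt (fun w : ℂ => w * z₀) z₀ (1:ℂ) := hasDerivAt_mul_const z₀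
    have hd1 : HasDerivAt ω d ((fun w : ℂ => w * z₀) 1) := by simpa using hd₀
    have hcomp : HasDerivAt (fun w : ℂ => ω (w * z₀)) (d * z₀) (1:ℂ) := hd1.comp 1 hmc
    have hreal : HasDerivAt (fun t : ℝ => ω ((t:ℂ) * z₀)) (d * z₀) (1:ℝ) := by
      have := hcomp.comp_ofReal
      simpa using this
    have hmul := hreal.const_mul (conj a)
    have := Complex.reCLM.hasFDerivAt.comp_hasDerivAt (1:ℝ) hmul
    refine this.congr_deriv (Eq.symm ?_)
    rw [hAdef]
    simp
    ring_nf
  have hk1 : 1 ≤ A.re := by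
    have hslope := hasDerivAt_iff_tendsto_slope.1 hφder
    have hmono : 𝓝[<] (1:ℝ) ≤ 𝓝[≠] (1:ℝ) :=
      nhdsWithin_mono _ (fun t ht => ne_of_lt ht)
    refine ge_of_tendsto (hslope.mono_left hmono) ?_
    filter_upwards [Ioo_mem_nhdsLT_of_mem (by norm_num : (1:ℝ) ∈ Ioc (0:ℝ) 1)] with t ht
    have hφ1 : (conj a * ω ((1:ℝ) * z₀)).re = 1 := by
      push_cast
      rw [one_mul, ← hadef, haa]
      norm_num
    have hmem : (t:ℂ) * z₀ ∈ ball (0:ℂ) ‖z₀‖ := by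
      rw [mem_ball_zero_iff, norm_mul, Complex.norm_real, Real.norm_eq_abs,
        abs_of_pos ht.1]
      nlinarith [ht.2, hrpos]
    have hφt : (conj a * ω ((t:ℂ) * z₀)).re ≤ t := by
      calc (conj a * ω ((t:ℂ) * z₀)).re ≤ ‖conj a * ω ((t:ℂ) * z₀)‖ := by
            exact Complex.re_le_norm _
        _ = ‖ω ((t:ℂ) * z₀)‖ := by
            rw [norm_mul, RCLike.norm_conj, ha1, one_mul]
        _ ≤ ‖(t:ℂ) * z₀‖ / ‖z₀‖ := hdsl _ hmem
        _ = t := by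
            rw [norm_mul, Complex.norm_real, Real.norm_eq_abs, abs_of_pos ht.1,
              mul_div_assoc, div_self (ne_of_gt hrpos), mul_one]
    rw [slope_def_field]
    have hneg : t - 1 < 0 := by linarith [ht.2]
    rw [le_div_iff_of_neg hneg, hφ1]
    linarith [hφt]
  -- tangential derivative : A.im = 0
  have hψder : HasDerivAt (fun θ : ℝ => (conj a * ω (Complex.exp ((θ:ℂ) * I) * z₀)).re)
      (I * A).re 0 := by
    have hin : HasDerivAt (fun w : ℂ => Complex.exp (w * I) * z₀) (I * z₀) (0:ℂ) := by
      have := (((hasDerivAt_id (0:ℂ)).mul_const I).cexp).mul_const z₀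
      simpa using this
    have hcomp : HasDerivAt (fun w : ℂ => ω (Complex.exp (w * I) * z₀))
        (d * (I * z₀)) (0:ℂ) := by
      have h5 : HasDerivAt ω d ((fun w : ℂ => Complex.exp (w * I) * z₀) 0) := by
        simp only [zero_mul, Complex.exp_zero, one_mul]
        exact hd₀
      have h6 := h5.comp (0:ℂ) hin
      exact h6
    have hreal := hcomp.comp_ofReal
    have hmul := hreal.const_mul (conj a)
    have h7 := Complex.reCLM.hasFDerivAt.comp_hasDerivAt (0:ℝ) hmul
    have heq : (starRingEnd ℂ) a * (d * (I * z₀)) = I * A := by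
      rw [hAdef]; ring
    rw [heq] at h7
    exact h7
  have hψmax : IsLocalMax (fun θ : ℝ => (conj a * ω (Complex.exp ((θ:ℂ) * I) * z₀)).re) 0 := by
    apply Filter.Eventually.of_forall
    intro θ
    have hb : ‖Complex.exp ((θ:ℂ) * I) * z₀‖ = ‖z₀‖ := by
      rw [norm_mul, Complex.norm_exp_ofReal_mul_I,
        one_mul]
    have h1 : (conj a * ω (Complex.exp ((θ:ℂ) * I) * z₀)).re ≤ 1 := by
      calc (conj a * ω (Complex.exp ((θ:ℂ) * I) * z₀)).re
          ≤ ‖conj a * ω (Complex.exp ((θ:ℂ) * I) * z₀)‖ := by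
            exact Complex.re_le_norm _
        _ = ‖ω (Complex.exp ((θ:ℂ) * I) * z₀)‖ := by
            rw [norm_mul, RCLike.norm_conj, ha1, one_mul]
        _ ≤ 1 := hsphere _ hb
    have h0 : (conj a * ω (Complex.exp (((0:ℝ):ℂ) * I) * z₀)).re = 1 := by
      rw [Complex.ofReal_zero, zero_mul, Complex.exp_zero, one_mul, ← hadef, haa]
      norm_num
    simp only [h0]
    rw [show ((0:ℝ):ℂ) = (0:ℂ) by norm_num] at h0
    calc (conj a * ω (Complex.exp ((θ:ℂ) * I) * z₀)).re ≤ 1 := h1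
      _ = _ := by rw [← h0]
  have hAim : A.im = 0 := by
    have := hψmax.hasDerivAt_eq_zero hψder
    have h2 : (I * A).re = -A.im := by simp [Complex.mul_re]
    rw [h2] at this
    linarith [this]
  -- final contradiction
  have haz : conj a - 1 ≠ 0 := by
    intro hcontra
    have : a = 1 := by
      have := congrArg (starRingEnd ℂ) (sub_eq_zero.1 hcontra)
      simpa using this
    exact hne z₀ (by rw [← hadef, this]; ring)
  have hA : A = (conj a - 1) * (z₀ * G z₀) / 3 := by
    rw [hAdef, hddef]
    linear_combination (-(z₀ * G z₀)/3) * haa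
  have hAre : A = ((A.re : ℝ) : ℂ) := by
    apply Complex.ext
    · simp
    · simp [hAim]
  have hw : z₀ * G z₀ = 3 * A * (conj a - 1)⁻¹ := by
    rw [hA]
    field_simp
  have hare_lt : a.re < 1 := by
    rcases lt_or_eq_of_le (by
      calc a.re ≤ ‖a‖ := Complex.re_le_norm a
        _ = 1 := by rw [ha1]) with h | h
    · exact h
    · exfalso
      have hnsq : Complex.normSq a = 1 := by
        rw [Complex.normSq_eq_norm_sq, ha1]; norm_num
      have him : a.im = 0 := by
        rw [Complex.normSq_apply] at hnsq
        nlinarith [hnsq, h]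
      have : a = 1 := by
        apply Complex.ext <;> simp [h, him]
      exact hne z₀ (by rw [← hadef, this]; ring)
  have hnsq : Complex.normSq a = 1 := by
    rw [Complex.normSq_eq_norm_sq, ha1]; norm_num
  have hinv_re : ((conj a - 1)⁻¹).re = -(1/2) := by
    rw [Complex.inv_re]
    have h1 : (conj a - 1).re = a.re - 1 := by simp
    have h2 : Complex.normSq (conj a - 1) = 2 - 2 * a.re := by
      rw [Complex.normSq_apply]
      simp only [Complex.sub_re, Complex.sub_im, Complex.conj_re, Complex.conj_im,
        Complex.one_re, Complex.one_im]
      rw [Complex.normSq_apply] at hnsq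
      nlinarith [hnsq]
    rw [h1, h2]
    rw [div_eq_iff (by linarith : (2:ℝ) - 2 * a.re ≠ 0)]
    ring
  have hwre : (z₀ * G z₀).re = 3 * A.re * ((conj a - 1)⁻¹).re := by
    rw [hw]
    nth_rewrite 1 [hAre]
    rw [show (3:ℂ) * ((A.re : ℝ):ℂ) = (((3 * A.re : ℝ)):ℂ) by push_cast; ring]
    rw [Complex.re_ofReal_mul]
  have hfinal := hre z₀ hz₀ball
  rw [Complex.add_re, Complex.one_re] at hfinal
  rw [hwre, hinv_re] at hfinal
  nlinarith [hk1, hfinal]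

theorem deriv_subordinate (f : ℂ → ℂ) (hf : IsInClassF f) :
    ∃ ω : ℂ → ℂ, AnalyticOnNhd ℂ ω (ball (0 : ℂ) 1) ∧ ω 0 = 0 ∧
      (∀ z ∈ ball (0 : ℂ) 1, ‖ω z‖ ≤ ‖z‖) ∧
      (∀ z ∈ ball (0 : ℂ) 1, deriv f z = 1 / (1 - ω z) ^ 3) := by
  obtain ⟨hfa, hf0, hf'0, hfne, hfre⟩ := hf
  set g : ℂ → ℂ := fun z => deriv (deriv f) z / deriv f z with hgdef
  have hf'a : AnalyticOnNhd ℂ (deriv f) (ball (0:ℂ) 1) := hfa.deriv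
  have hf''a : AnalyticOnNhd ℂ (deriv (deriv f)) (ball (0:ℂ) 1) := hf'a.deriv
  have hgd : DifferentiableOn ℂ g (ball (0:ℂ) 1) := by
    intro z hz
    exact (((hf''a z hz).div (hf'a z hz) (hfne z hz)).differentiableAt).differentiableWithinAt
  obtain ⟨h, h0, hh⟩ := exists_primitive_aux g hgd
  have hexp : ∀ z ∈ ball (0:ℂ) 1, deriv f z = Complex.exp (h z) := by
    have hq : ∀ x ∈ ball (0:ℂ) 1,
        HasDerivAt (fun w => deriv f w * Complex.exp (-h w)) 0 x := by
      intro x hx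
      have h1 : HasDerivAt (deriv f) (deriv (deriv f) x) x :=
        ((hf'a x hx).differentiableAt).hasDerivAt
      have h2 : HasDerivAt (fun w => Complex.exp (-h w))
          (Complex.exp (-h x) * -(g x)) x := ((hh x hx).neg).cexp
      have h3 := h1.mul h2
      refine h3.congr_deriv (Eq.symm ?_)
      have h4 : deriv f x * g x = deriv (deriv f) x := by
        rw [hgdef]
        field_simp [hfne x hx]
      linear_combination Complex.exp (-h x) * h4
    have hdq : DifferentiableOn ℂ (fun w => deriv f w * Complex.exp (-h w)) (ball (0:ℂ) 1) :=
      fun x hx => ((hq x hx).differentiableAt).differentiableWithinAt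
    have hfw : ∀ x ∈ ball (0:ℂ) 1,
        fderivWithin ℂ (fun w => deriv f w * Complex.exp (-h w)) (ball (0:ℂ) 1) x = 0 := by
      intro x hx
      rw [fderivWithin_of_isOpen isOpen_ball hx, (hq x hx).hasFDerivAt.fderiv]
      ext w
      simp
    intro z hz
    have hconst := (convex_ball (0:ℂ) 1).is_const_of_fderivWithin_eq_zero hdq hfw hz
      (mem_ball_self one_pos)
    rw [hf'0, h0] at hconst
    simp only [neg_zero, Complex.exp_zero, mul_one] at hconst
    calc deriv f z = deriv f z * (Complex.exp (-h z) * Complex.exp (h z)) := by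
          rw [← Complex.exp_add]
          simp
      _ = Complex.exp (h z) := by rw [← mul_assoc, hconst, one_mul]
  set ω : ℂ → ℂ := fun z => 1 - Complex.exp (-h z / 3) with hωdef
  have hsub1 : ∀ z, 1 - ω z = Complex.exp (-h z / 3) := by
    intro z
    simp only [hωdef]
    exact sub_sub_cancel 1 _
  have hω0 : ω 0 = 0 := by
    simp only [hωdef, h0]
    simp
  have hne : ∀ z, 1 - ω z ≠ 0 := by
    intro z
    rw [hsub1 z]
    exact Complex.exp_ne_zero _
  have hωder : ∀ z ∈ ball (0:ℂ) 1, HasDerivAt ω (g z / 3 * (1 - ω z)) z := by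
    intro z hz
    have h1 : HasDerivAt (fun w => -h w / 3) (-g z / 3) z := ((hh z hz).neg).div_const 3
    have h2 := h1.cexp
    have h3 := h2.const_sub 1
    have h4 : HasDerivAt ω (-(Complex.exp (-h z / 3) * (-g z / 3))) z := h3
    convert h4 using 1
    rw [hsub1 z]
    ring
  have hωd : DifferentiableOn ℂ ω (ball (0:ℂ) 1) :=
    fun z hz => ((hωder z hz).differentiableAt).differentiableWithinAt
  have hre : ∀ z ∈ ball (0:ℂ) 1, -(1/2 : ℝ) < (1 + z * g z).re := by
    intro z hz
    have := hfre z hz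
    rw [hgdef]
    rw [← mul_div_assoc]
    exact this
  have hjack := jack_bound ω g hωd hω0 hωder hne hre
  refine ⟨ω, hωd.analyticOnNhd isOpen_ball, hω0, ?_, ?_⟩
  · intro z hz
    have hmaps : MapsTo ω (ball (0:ℂ) 1) (ball (0:ℂ) 1) := by
      intro y hy
      exact mem_ball_zero_iff.2 (hjack y hy)
    exact Complex.norm_le_norm_of_mapsTo_ball hωd (hmaps.mono_right ball_subset_closedBall) hω0
      (mem_ball_zero_iff.1 hz)
  · intro z hz
    have hc : ((3:ℕ):ℂ) * (-h z / 3) = -h z := by push_cast; ring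
    rw [hexp z hz, hsub1 z, ← Complex.exp_nat_mul, hc, Complex.exp_neg, one_div, inv_inv]
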